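/- Let j ≥ 1 be an integer and ε′ = 1/(100(2j+1)). There is a constant C depending only on j such that for every dyadic M ≥ 1, the Lebesgue measure of the set of μ ∈ ℝ with |μ| ∼ M for which there exist nonzero integers k₁, k₂ with k = k₁ + k₂ nonzero and |μ − (k^{2j+1} − k₁^{2j+1} − k₂^{2j+1})| ≤ ⟨|k_min| |k_max|^{2j}⟩^{ε′} is at most C M^{(100j+1)/(50(2j+1))}. -/

import Mathlib

open MeasureTheory Real Set
open scoped ENNReal NNReal

noncomputable section

/-- Japanese bracket `⟨x⟩ = 1 + |x|`. -/
def jb (x : ℝ) : ℝ := 1 + |x|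

/-- `σ = τ + (−1)^j k^{2j+1}`. -/
def sgm (j : ℕ) (k : ℤ) (τ : ℝ) : ℝ := τ + (-1 : ℝ) ^ j * (k : ℝ) ^ (2 * j + 1)

/-- Fourier transform in the time variable. -/
def timeFT (f : ℝ → ℂ) (τ : ℝ) : ℂ :=
  ((1 / (2 * π) : ℝ) : ℂ) * ∫ t : ℝ, Complex.exp (-(Complex.I * (τ : ℂ) * (t : ℂ))) * f t

/-- Space–time Fourier transform of a `2π`-periodic function, which is represented through
its `x`-Fourier coefficients `u k t` (`k ∈ ℤ` the space frequency, `t` the time). -/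
def stFT (u : ℤ → ℝ → ℂ) (k : ℤ) (τ : ℝ) : ℂ := timeFT (u k) τ

/-- Bourgain norm `‖u‖_{X_{s,b}} = ‖⟨k⟩^s ⟨σ⟩^b 𝓕u(k,τ)‖_{L²_{k,τ}}`, counting measure on
`k ∈ ℤ∖{0}`, Lebesgue measure in `τ`. -/
def Xnorm (j : ℕ) (s b : ℝ) (u : ℤ → ℝ → ℂ) : ℝ≥0∞ :=
  (∑' k : {k : ℤ // k ≠ 0}, ∫⁻ τ : ℝ,
      (ENNReal.ofReal (jb (k.1 : ℝ) ^ s * jb (sgm j k.1 τ) ^ b) * ‖stFT u k.1 τ‖₊) ^ 2) ^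
    (1 / 2 : ℝ)

/-- The quantity `‖⟨k⟩^s ⟨σ⟩^b 𝓕u(k,τ)‖_{L²_k L¹_τ}`. -/
def L2L1w (j : ℕ) (s b : ℝ) (u : ℤ → ℝ → ℂ) : ℝ≥0∞ :=
  (∑' k : {k : ℤ // k ≠ 0},
      (∫⁻ τ : ℝ, ENNReal.ofReal (jb (k.1 : ℝ) ^ s * jb (sgm j k.1 τ) ^ b) * ‖stFT u k.1 τ‖₊) ^ 2) ^
    (1 / 2 : ℝ)

/-- `‖u‖_{Y_s} = ‖u‖_{X_{s,1/2}} + ‖⟨k⟩^s 𝓕u(k,τ)‖_{L²_k L¹_τ}`. -/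
def Ynorm (j : ℕ) (s : ℝ) (u : ℤ → ℝ → ℂ) : ℝ≥0∞ :=
  Xnorm j s (1 / 2) u + L2L1w j s 0 u

/-- `‖u‖_{Z_s} = ‖u‖_{X_{s,−1/2}} + ‖⟨k⟩^s ⟨σ⟩^{−1/2} 𝓕u(k,τ)‖_{L²_k L¹_τ}`. -/
def Znorm (j : ℕ) (s : ℝ) (u : ℤ → ℝ → ℂ) : ℝ≥0∞ :=
  Xnorm j s (-(1 / 2)) u + L2L1w j s (-(1 / 2)) u

/-- `v` is an extension of `u` beyond the time interval `[0,δ]`. -/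
def agreeOn (δ : ℝ) (v u : ℤ → ℝ → ℂ) : Prop :=
  ∀ k : ℤ, ∀ t ∈ Icc (0 : ℝ) δ, v k t = u k t

/-- Restriction norm `‖u‖_{X_{s,b}^δ} = inf {‖v‖_{X_{s,b}} : v = u on [0,δ]}`. -/
def XnormR (j : ℕ) (s b δ : ℝ) (u : ℤ → ℝ → ℂ) : ℝ≥0∞ :=
  ⨅ (v : ℤ → ℝ → ℂ) (_ : agreeOn δ v u), Xnorm j s b v

/-- Restriction norm `‖u‖_{Y_s^δ} = inf {‖v‖_{Y_s} : v = u on [0,δ]}`. -/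
def YnormR (j : ℕ) (s δ : ℝ) (u : ℤ → ℝ → ℂ) : ℝ≥0∞ :=
  ⨅ (v : ℤ → ℝ → ℂ) (_ : agreeOn δ v u), Ynorm j s v

/-- Sobolev norm `‖φ‖_{H^s} = ‖⟨k⟩^s 𝓕ₓφ(k)‖_{L²_k}` of a `2π`-periodic function given through its
Fourier coefficients `φ : ℤ → ℂ`. -/
def HsN (s : ℝ) (φ : ℤ → ℂ) : ℝ≥0∞ :=
  (∑' k : ℤ, (ENNReal.ofReal (jb (k : ℝ) ^ s) * ‖φ k‖₊) ^ 2) ^ (1 / 2 : ℝ)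

/-- The physical-space function attached to the `x`-Fourier coefficients `u k t`. -/
def phys (u : ℤ → ℝ → ℂ) (x t : ℝ) : ℂ :=
  ∑' k : ℤ, Complex.exp (Complex.I * (k : ℂ) * (x : ℂ)) * u k t

/-- `L^p` norm on `T × ℝ` (one period in `x`, all of time). -/
def LpXT (p : ℝ) (u : ℤ → ℝ → ℂ) : ℝ≥0∞ :=
  (∫⁻ t : ℝ, ∫⁻ x in Ioc (0 : ℝ) (2 * π), (‖phys u x t‖₊ : ℝ≥0∞) ^ p) ^ (1 / p)

/-- Convolution in the space frequency: the Fourier coefficients of the product of two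
`2π`-periodic functions. -/
def convK (u v : ℤ → ℝ → ℂ) (k : ℤ) (t : ℝ) : ℂ := ∑' k₁ : ℤ, u k₁ t * v (k - k₁) t

/-- Fourier coefficients of `∂ₓ u`. -/
def dX (u : ℤ → ℝ → ℂ) (k : ℤ) (t : ℝ) : ℂ := Complex.I * (k : ℂ) * u k t

/-- Fourier coefficients of the nonlinearity
`½∂ₓ(u²) + ∂ₓ(1−∂ₓ²)⁻¹[u² + ½u_x²]`. -/
def nonlin (u : ℤ → ℝ → ℂ) (k : ℤ) (t : ℝ) : ℂ :=
  (Complex.I * (k : ℂ) / 2) * convK u u k t +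
    (Complex.I * (k : ℂ) / (1 + (k : ℂ) ^ 2)) *
      (convK u u k t + (1 / 2 : ℂ) * convK (dX u) (dX u) k t)

/-- `u` is a zero-`x`-mean solution of the higher-order shallow water equation
`u_t + ∂ₓ^{2j+1}u + ½∂ₓ(u²) + ∂ₓ(1−∂ₓ²)⁻¹[u² + ½u_x²] = 0` on the time set `I`,
formulated on the `x`-Fourier side. -/
def solvesOn (j : ℕ) (u : ℤ → ℝ → ℂ) (I : Set ℝ) : Prop :=
  (∀ t : ℝ, u 0 t = 0) ∧
    ∀ k : ℤ, ∀ t ∈ I,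
      HasDerivAt (u k)
        (-(Complex.I * (-1 : ℂ) ^ j * (k : ℂ) ^ (2 * j + 1) * u k t + nonlin u k t)) t

/-- `t ↦ u(·,t)` is continuous with values in `H^s` on the time set `I`. -/
def HsContOn (s : ℝ) (u : ℤ → ℝ → ℂ) (I : Set ℝ) : Prop :=
  ∀ t₀ ∈ I, Filter.Tendsto (fun t => HsN s (fun k => u k t - u k t₀))
    (nhdsWithin t₀ I) (nhds 0)

/-- `η` is a smooth cutoff supported in `[−1,2]` and equal to `1` on `[0,1]`. -/
structure IsCutoff (η : ℝ → ℝ) : Prop where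
  smooth : ContDiff ℝ (⊤ : ℕ∞) η
  supp : ∀ t : ℝ, t ∉ Icc (-1 : ℝ) 2 → η t = 0
  one : ∀ t ∈ Icc (0 : ℝ) 1, η t = 1

/-- `L²` norm on `(ℤ∖{0}) × ℝ`. -/
def L2nz (F : ℤ → ℝ → ℂ) : ℝ≥0∞ :=
  (∑' k : {k : ℤ // k ≠ 0}, ∫⁻ τ : ℝ, (‖F k.1 τ‖₊ : ℝ≥0∞) ^ 2) ^ (1 / 2 : ℝ)

/-- `L²_k L¹_τ` norm on `(ℤ∖{0}) × ℝ`. -/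
def L2L1nz (F : ℤ → ℝ → ℂ) : ℝ≥0∞ :=
  (∑' k : {k : ℤ // k ≠ 0}, (∫⁻ τ : ℝ, (‖F k.1 τ‖₊ : ℝ≥0∞)) ^ 2) ^ (1 / 2 : ℝ)

end

set_option maxHeartbeats 1000000

section Aux
open Finset

lemma core_ineq (j : ℕ) (hj : 1 ≤ j) (a b : ℤ) (ha : 1 ≤ a) (hab : a ≤ b) :
    a * b ^ (2*j) + (a^(2*j+1) + b^(2*j+1)) ≤ (a+b)^(2*j+1) := by
  have h1 : (∑ i ∈ range (2*j+1), (a+b) ^ i * b ^ (2*j+1 - 1 - i)) * ((a+b) - b)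
      = (a+b)^(2*j+1) - b^(2*j+1) := geom_sum₂_mul (a+b) b (2*j+1)
  rw [show a+b-b = a by ring] at h1
  have hb : (1:ℤ) ≤ b := ha.trans hab
  have hterm : ∀ i ∈ range (2*j+1), b ^ (2*j) ≤ (a+b) ^ i * b ^ (2*j+1-1-i) := by
    intro i hi
    simp only [Finset.mem_range] at hi
    have h2 : b ^ i ≤ (a+b)^i := pow_le_pow_left₀ (by linarith) (by linarith) i
    calc b ^ (2*j) = b ^ i * b ^ (2*j+1-1-i) := by
          rw [← pow_add]; congr 1; omega
      _ ≤ (a+b)^i * b ^ (2*j+1-1-i) := by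
          exact mul_le_mul_of_nonneg_right h2 (by positivity)
  have hsum : ((2*j+1 : ℕ) : ℤ) * b ^ (2*j)
      ≤ ∑ i ∈ range (2*j+1), (a+b) ^ i * b ^ (2*j+1-1-i) := by
    calc ((2*j+1 : ℕ) : ℤ) * b ^ (2*j) = ∑ _i ∈ range (2*j+1), b ^ (2*j) := by
          rw [Finset.sum_const, card_range, nsmul_eq_mul]
      _ ≤ _ := Finset.sum_le_sum hterm
  have hpos : (0:ℤ) ≤ a * b^(2*j) := by positivity
  have han : a^(2*j+1) ≤ a * b^(2*j) := by
    have h3 : a^(2*j) ≤ b^(2*j) := pow_le_pow_left₀ (by linarith) hab _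
    calc a^(2*j+1) = a * a^(2*j) := by ring
      _ ≤ a * b^(2*j) := by nlinarith
  have hmul : ((2*j+1:ℕ):ℤ) * b^(2*j) * a ≤ (a+b)^(2*j+1) - b^(2*j+1) := by
    rw [← h1]
    exact mul_le_mul_of_nonneg_right hsum (by linarith)
  have hj' : (1:ℤ) ≤ (j:ℤ) := by exact_mod_cast hj
  have h4 : a*b^(2*j) ≤ (j:ℤ) * (a*b^(2*j)) := le_mul_of_one_le_left hpos hj'
  push_cast at hmul
  nlinarith [hmul, han, h4]

lemma pos_case (j : ℕ) (hj : 1 ≤ j) (a b : ℤ) (ha : 0 < a) (hb : 0 < b) :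
    min a b * (a+b)^(2*j) ≤ 2^(2*j) * ((a+b)^(2*j+1) - a^(2*j+1) - b^(2*j+1)) ∧
    0 < (a+b)^(2*j+1) - a^(2*j+1) - b^(2*j+1) := by
  wlog hab : a ≤ b generalizing a b
  · have := this b a hb ha (by omega)
    rw [min_comm, add_comm b a] at this
    constructor
    · calc min a b * (a+b)^(2*j) ≤ 2^(2*j) * ((a+b)^(2*j+1) - b^(2*j+1) - a^(2*j+1)) := this.1
        _ = 2^(2*j) * ((a+b)^(2*j+1) - a^(2*j+1) - b^(2*j+1)) := by ring
    · linarith [this.2]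
  have h := core_ineq j hj a b ha hab
  have hmin : min a b = a := min_eq_left hab
  have hpowpos : 0 < a * b^(2*j) := by positivity
  refine ⟨?_, by linarith⟩
  rw [hmin]
  have h2 : (a+b)^(2*j) ≤ 2^(2*j) * b^(2*j) := by
    calc (a+b)^(2*j) ≤ (2*b)^(2*j) := pow_le_pow_left₀ (by linarith) (by linarith) _
      _ = 2^(2*j) * b^(2*j) := mul_pow 2 b (2*j)
  calc a * (a+b)^(2*j) ≤ a * (2^(2*j) * b^(2*j)) := by
        exact mul_le_mul_of_nonneg_left h2 (by linarith)
    _ = 2^(2*j) * (a * b^(2*j)) := by ring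
    _ ≤ 2^(2*j) * ((a+b)^(2*j+1) - a^(2*j+1) - b^(2*j+1)) := by
        have h3 : a * b^(2*j) ≤ (a+b)^(2*j+1) - a^(2*j+1) - b^(2*j+1) := by linarith
        exact mul_le_mul_of_nonneg_left h3 (by positivity)

lemma key_aux (j : ℕ) (hj : 1 ≤ j) (k₁ k₂ : ℤ) (h₁ : k₁ ≠ 0) (h₂ : k₂ ≠ 0)
    (hk : k₁ + k₂ ≠ 0) (hcase : 0 < k₁ ∨ (k₁ < 0 ∧ k₂ < 0)) :
    min (min |k₁+k₂| |k₁|) |k₂| * (max (max |k₁+k₂| |k₁|) |k₂|)^(2*j)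
      ≤ 2^(2*j) * |(k₁+k₂)^(2*j+1) - k₁^(2*j+1) - k₂^(2*j+1)| := by
  have negpow : ∀ x : ℤ, (-x)^(2*j+1) = -x^(2*j+1) := fun x => Odd.neg_pow ⟨j, by ring⟩ x
  rcases hcase with hk₁ | ⟨hk₁, hk₂⟩
  · rcases h₂.lt_or_gt with hk₂ | hk₂
    · rcases hk.lt_or_gt with hK | hK
      · have hps := pos_case j hj (-(k₁+k₂)) k₁ (by linarith) hk₁
        have hsum : -(k₁+k₂) + k₁ = -k₂ := by ring
        rw [hsum] at hps
        have hR : (k₁+k₂)^(2*j+1) - k₁^(2*j+1) - k₂^(2*j+1)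
            = (-k₂)^(2*j+1) - (-(k₁+k₂))^(2*j+1) - k₁^(2*j+1) := by
          rw [negpow, negpow]; ring
        rw [hR, abs_of_pos hps.2, abs_of_neg hK, abs_of_pos hk₁, abs_of_neg hk₂]
        have e1 : min (min (-(k₁+k₂)) k₁) (-k₂) = min (-(k₁+k₂)) k₁ := by omega
        have e2 : max (max (-(k₁+k₂)) k₁) (-k₂) = -k₂ := by omega
        rw [e1, e2]
        exact hps.1
      · have hps := pos_case j hj (k₁+k₂) (-k₂) hK (by linarith)
        have hsum : k₁+k₂ + -k₂ = k₁ := by ring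
        rw [hsum] at hps
        have hR : (k₁+k₂)^(2*j+1) - k₁^(2*j+1) - k₂^(2*j+1)
            = -(k₁^(2*j+1) - (k₁+k₂)^(2*j+1) - (-k₂)^(2*j+1)) := by
          rw [negpow]; ring
        rw [hR, abs_neg, abs_of_pos hps.2, abs_of_pos hK, abs_of_pos hk₁, abs_of_neg hk₂]
        have e1 : min (min (k₁+k₂) k₁) (-k₂) = min (k₁+k₂) (-k₂) := by omega
        have e2 : max (max (k₁+k₂) k₁) (-k₂) = k₁ := by omega
        rw [e1, e2]
        exact hps.1
    · have hK : 0 < k₁ + k₂ := by linarith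
      have hps := pos_case j hj k₁ k₂ hk₁ hk₂
      rw [abs_of_pos hps.2, abs_of_pos hK, abs_of_pos hk₁, abs_of_pos hk₂]
      have e1 : min (min (k₁+k₂) k₁) k₂ = min k₁ k₂ := by omega
      have e2 : max (max (k₁+k₂) k₁) k₂ = k₁+k₂ := by omega
      rw [e1, e2]
      exact hps.1
  · have hK : k₁ + k₂ < 0 := by linarith
    have hps := pos_case j hj (-k₁) (-k₂) (by linarith) (by linarith)
    have hsum : -k₁ + -k₂ = -(k₁+k₂) := by ring
    rw [hsum] at hps
    have hR : (k₁+k₂)^(2*j+1) - k₁^(2*j+1) - k₂^(2*j+1)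
        = -((-(k₁+k₂))^(2*j+1) - (-k₁)^(2*j+1) - (-k₂)^(2*j+1)) := by
      rw [negpow, negpow, negpow]; ring
    rw [hR, abs_neg, abs_of_pos hps.2, abs_of_neg hK, abs_of_neg hk₁, abs_of_neg hk₂]
    have e1 : min (min (-(k₁+k₂)) (-k₁)) (-k₂) = min (-k₁) (-k₂) := by omega
    have e2 : max (max (-(k₁+k₂)) (-k₁)) (-k₂) = -(k₁+k₂) := by omega
    rw [e1, e2]
    exact hps.1

lemma key_int (j : ℕ) (hj : 1 ≤ j) (k₁ k₂ : ℤ) (h₁ : k₁ ≠ 0) (h₂ : k₂ ≠ 0)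
    (hk : k₁ + k₂ ≠ 0) :
    min (min |k₁+k₂| |k₁|) |k₂| * (max (max |k₁+k₂| |k₁|) |k₂|)^(2*j)
      ≤ 2^(2*j) * |(k₁+k₂)^(2*j+1) - k₁^(2*j+1) - k₂^(2*j+1)| := by
  rcases lt_or_ge 0 k₁ with hc | hc
  · exact key_aux j hj k₁ k₂ h₁ h₂ hk (Or.inl hc)
  · rcases h₂.lt_or_gt with hk₂ | hk₂
    · exact key_aux j hj k₁ k₂ h₁ h₂ hk (Or.inr ⟨h₁.lt_of_le hc, hk₂⟩)
    · have := key_aux j hj k₂ k₁ h₂ h₁ (by omega) (Or.inl hk₂)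
      rw [add_comm k₂ k₁] at this
      calc min (min |k₁+k₂| |k₁|) |k₂| * (max (max |k₁+k₂| |k₁|) |k₂|)^(2*j)
          = min (min |k₁+k₂| |k₂|) |k₁| * (max (max |k₁+k₂| |k₂|) |k₁|)^(2*j) := by
            rw [min_right_comm, max_assoc, max_comm |k₁| |k₂|, ← max_assoc]
        _ ≤ 2^(2*j) * |(k₁+k₂)^(2*j+1) - k₂^(2*j+1) - k₁^(2*j+1)| := this
        _ = 2^(2*j) * |(k₁+k₂)^(2*j+1) - k₁^(2*j+1) - k₂^(2*j+1)| := by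
            congr 1; rw [show (k₁+k₂)^(2*j+1) - k₂^(2*j+1) - k₁^(2*j+1)
              = (k₁+k₂)^(2*j+1) - k₁^(2*j+1) - k₂^(2*j+1) by ring]

lemma mvt_term (θ : ℝ) (hθ0 : 0 < θ) (hθ1 : θ < 1) (x : ℝ) (hx : 1 ≤ x) :
    (1-θ) * x^(-θ) ≤ x^(1-θ) - (x-1)^(1-θ) := by
  have hab : x - 1 < x := by linarith
  obtain ⟨c, hc, hceq⟩ := exists_hasDerivAt_eq_slope (fun y => y^(1-θ))
    (fun y => (1-θ) * y^(-θ)) hab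
    (fun y hy => (Real.continuousAt_rpow_const y (1-θ) (Or.inr (by linarith))).continuousWithinAt)
    (fun y hy => by
      have hy0 : 0 < y := lt_of_le_of_lt (by linarith) hy.1
      have := Real.hasDerivAt_rpow_const (x := y) (p := 1-θ) (Or.inl hy0.ne')
      simpa [show (1-θ)-1 = -θ by ring] using this)
  have hc0 : 0 < c := lt_of_le_of_lt (by linarith) hc.1
  have hmono : x^(-θ) ≤ c^(-θ) :=
    Real.rpow_le_rpow_of_nonpos hc0 hc.2.le (by linarith)
  have heq : (1-θ) * c^(-θ) = x^(1-θ) - (x-1)^(1-θ) := by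
    rw [hceq]; field_simp; ring
  nlinarith [heq, hmono]

lemma harmonic_sum (θ : ℝ) (hθ0 : 0 < θ) (hθ1 : θ ≤ 1/2) (A : ℕ) :
    ∑ a ∈ Finset.Icc 1 A, ((a:ℝ))^(-θ) ≤ 2 * (A:ℝ)^(1-θ) := by
  have hθ1' : θ < 1 := by linarith
  have h1θ : (0:ℝ) < 1 - θ := by linarith
  have step : ∑ a ∈ Finset.Icc 1 A, ((a:ℝ))^(-θ)
      ≤ ∑ a ∈ Finset.Icc 1 A, (((a:ℝ))^(1-θ) - ((a:ℝ)-1)^(1-θ)) / (1-θ) := by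
    apply Finset.sum_le_sum
    intro a ha
    rw [Finset.mem_Icc] at ha
    have hx : (1:ℝ) ≤ (a:ℝ) := by exact_mod_cast ha.1
    rw [le_div_iff₀ h1θ]
    calc (a:ℝ)^(-θ) * (1-θ) = (1-θ) * (a:ℝ)^(-θ) := by ring
      _ ≤ _ := mvt_term θ hθ0 hθ1' (a:ℝ) hx
  have tele : ∑ a ∈ Finset.Icc 1 A, (((a:ℝ))^(1-θ) - ((a:ℝ)-1)^(1-θ)) = (A:ℝ)^(1-θ) := by
    rw [← Finset.Ico_add_one_right_eq_Icc, Finset.sum_Ico_eq_sum_range]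
    have h2 : ∀ i ∈ Finset.range (A+1-1), (((1+i:ℕ):ℝ))^(1-θ) - (((1+i:ℕ):ℝ)-1)^(1-θ)
        = (fun n : ℕ => ((n:ℝ))^(1-θ)) (i+1) - (fun n : ℕ => ((n:ℝ))^(1-θ)) i := by
      intro i _; simp only; push_cast; ring_nf
    rw [Finset.sum_congr rfl h2, Finset.sum_range_sub (fun n : ℕ => ((n:ℝ))^(1-θ))]
    simp [Real.zero_rpow h1θ.ne']
  calc ∑ a ∈ Finset.Icc 1 A, ((a:ℝ))^(-θ)
      ≤ ∑ a ∈ Finset.Icc 1 A, (((a:ℝ))^(1-θ) - ((a:ℝ)-1)^(1-θ)) / (1-θ) := step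
    _ = (∑ a ∈ Finset.Icc 1 A, (((a:ℝ))^(1-θ) - ((a:ℝ)-1)^(1-θ))) / (1-θ) := by
        rw [Finset.sum_div]
    _ = (A:ℝ)^(1-θ) / (1-θ) := by rw [tele]
    _ ≤ 2 * (A:ℝ)^(1-θ) := by
        rw [div_le_iff₀ h1θ]
        have hA : (0:ℝ) ≤ (A:ℝ)^(1-θ) := Real.rpow_nonneg (by positivity) _
        nlinarith

lemma sum_bound (j : ℕ) (hj : 1 ≤ j) (Q : ℝ) (hQ1 : 1 ≤ Q) :
    ∑ a ∈ Finset.Icc 1 ⌊Q^(1/(2*(j:ℝ)+1))⌋₊, (2*((Q/(a:ℝ))^(1/(2*(j:ℝ)))) + 1)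
      ≤ 5 * Q^(2*(1/(2*(j:ℝ)+1))) := by
  have hjℝ : (1:ℝ) ≤ (j:ℝ) := by exact_mod_cast hj
  have hQ0 : (0:ℝ) < Q := by linarith
  set θ : ℝ := 1/(2*(j:ℝ)) with hθdef
  set e1 : ℝ := 1/(2*(j:ℝ)+1) with he1def
  set A : ℕ := ⌊Q^e1⌋₊ with hAdef
  have hden : (0:ℝ) < 2*(j:ℝ)+1 := by linarith
  have hden2 : (0:ℝ) < 2*(j:ℝ) := by linarith
  have hθ0 : 0 < θ := by positivity
  have hθ12 : θ ≤ 1/2 := by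
    rw [hθdef, div_le_div_iff₀ hden2 (by norm_num)]; nlinarith
  have he10 : 0 < e1 := by positivity
  have hA : (A:ℝ) ≤ Q^e1 := Nat.floor_le (by positivity)
  have hsplit : ∀ a ∈ Finset.Icc 1 A, 2*((Q/(a:ℝ))^θ) + 1
      = 2*(Q^θ * ((a:ℝ))^(-θ)) + 1 := by
    intro a ha
    rw [Finset.mem_Icc] at ha
    have ha0 : (0:ℝ) < (a:ℝ) := by exact_mod_cast ha.1
    rw [Real.div_rpow hQ0.le ha0.le, Real.rpow_neg ha0.le, div_eq_mul_inv]
  rw [Finset.sum_congr rfl hsplit]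
  have hsum : ∑ a ∈ Finset.Icc 1 A, (2*(Q^θ * ((a:ℝ))^(-θ)) + 1)
      = 2*Q^θ * (∑ a ∈ Finset.Icc 1 A, ((a:ℝ))^(-θ)) + A := by
    rw [Finset.sum_add_distrib, Finset.sum_const, Nat.card_Icc, Finset.mul_sum]
    simp [mul_assoc]
  rw [hsum]
  have hharm := harmonic_sum θ hθ0 hθ12 A
  have hQθ0 : (0:ℝ) ≤ Q^θ := by positivity
  have hQA : Q^θ * (A:ℝ)^(1-θ) ≤ Q^(2*e1) := by
    have h1 : (A:ℝ)^(1-θ) ≤ (Q^e1)^(1-θ) :=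
      Real.rpow_le_rpow (by positivity) hA (by linarith)
    have h2 : (Q^e1)^(1-θ) = Q^(e1*(1-θ)) := (Real.rpow_mul hQ0.le _ _).symm
    have h3 : Q^θ * Q^(e1*(1-θ)) = Q^(θ + e1*(1-θ)) := (Real.rpow_add hQ0 _ _).symm
    have h4 : θ + e1*(1-θ) = 2*e1 := by
      rw [hθdef, he1def]; field_simp; ring
    calc Q^θ * (A:ℝ)^(1-θ) ≤ Q^θ * (Q^e1)^(1-θ) :=
          mul_le_mul_of_nonneg_left h1 hQθ0
      _ = Q^(θ + e1*(1-θ)) := by rw [h2, h3]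
      _ = Q^(2*e1) := by rw [h4]
  have hA2 : (A:ℝ) ≤ Q^(2*e1) := by
    calc (A:ℝ) ≤ Q^e1 := hA
      _ ≤ Q^(2*e1) := Real.rpow_le_rpow_of_exponent_le hQ1 (by linarith)
  have hS0 : (0:ℝ) ≤ ∑ a ∈ Finset.Icc 1 A, ((a:ℝ))^(-θ) :=
    Finset.sum_nonneg (fun a _ => by positivity)
  have hfin : 2*Q^θ * (∑ a ∈ Finset.Icc 1 A, ((a:ℝ))^(-θ)) ≤ 4 * Q^(2*e1) := by
    calc 2*Q^θ * (∑ a ∈ Finset.Icc 1 A, ((a:ℝ))^(-θ))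
        ≤ 2*Q^θ * (2 * (A:ℝ)^(1-θ)) := by nlinarith
      _ = 4 * (Q^θ * (A:ℝ)^(1-θ)) := by ring
      _ ≤ 4 * Q^(2*e1) := by linarith
  linarith

lemma witness_bounds (j : ℕ) (hj : 1 ≤ j) (M μ : ℝ) (hM : 1 ≤ M) (hMu : |μ| ≤ 4*M)
    (k₁ k₂ : ℤ) (h1 : k₁ ≠ 0) (h2 : k₂ ≠ 0) (hk : k₁ + k₂ ≠ 0)
    (hnear : |μ - (((k₁ + k₂ : ℤ) : ℝ) ^ (2 * j + 1) - (k₁ : ℝ) ^ (2 * j + 1) -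
        (k₂ : ℝ) ^ (2 * j + 1))| ≤
      (1 + ((min (min |k₁+k₂| |k₁|) |k₂| : ℤ):ℝ) *
        ((max (max |k₁+k₂| |k₁|) |k₂| : ℤ):ℝ)^(2*j)) ^ (1/(100*(2*(j:ℝ)+1)))) :
    ((min (min |k₁+k₂| |k₁|) |k₂| : ℤ):ℝ) * ((max (max |k₁+k₂| |k₁|) |k₂| : ℤ):ℝ)^(2*j)
        ≤ (4^j*(4+4^(j+2))) * M ∧
      |μ - (((k₁ + k₂ : ℤ) : ℝ) ^ (2 * j + 1) - (k₁ : ℝ) ^ (2 * j + 1) -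
        (k₂ : ℝ) ^ (2 * j + 1))| ≤
      (1 + 4^j*(4+4^(j+2))) * M ^ (1/(100*(2*(j:ℝ)+1))) := by
  have hjℝ : (1:ℝ) ≤ (j:ℝ) := by exact_mod_cast hj
  have hM0 : (0:ℝ) < M := by linarith
  have h4j : (1:ℝ) ≤ (4:ℝ)^j := one_le_pow₀ (by norm_num)
  set C₂ : ℝ := 4^j * (4 + 4^(j+2)) with hC₂def
  have hC₂ : (1:ℝ) ≤ C₂ := by
    have : (1:ℝ) ≤ 4 + 4^(j+2) := by nlinarith [pow_pos (show (0:ℝ)<4 by norm_num) (j+2)]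
    nlinarith
  set eps : ℝ := 1/(100*(2*(j:ℝ)+1)) with hepsdef
  have hden : (0:ℝ) < 2*(j:ℝ)+1 := by linarith
  have heps0 : 0 < eps := by positivity
  have heps12 : eps ≤ 1/2 := by
    rw [hepsdef, div_le_div_iff₀ (by positivity) (by norm_num)]; nlinarith
  set m : ℤ := min (min |k₁+k₂| |k₁|) |k₂| with hmdef
  set X : ℤ := max (max |k₁+k₂| |k₁|) |k₂| with hXdef
  have habsK : 1 ≤ |k₁+k₂| := Int.one_le_abs hk
  have habs1 : 1 ≤ |k₁| := Int.one_le_abs h1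
  have habs2 : 1 ≤ |k₂| := Int.one_le_abs h2
  have hm1 : 1 ≤ m := le_min (le_min habsK habs1) habs2
  have hmX : m ≤ X := le_trans (min_le_left _ _)
    (le_trans (min_le_left _ _) (le_trans (le_max_left _ _) (le_max_left _ _)))
  have hX1 : 1 ≤ X := hm1.trans hmX
  have hmR1 : (1:ℝ) ≤ ((m:ℤ):ℝ) := by exact_mod_cast hm1
  have hmXR : ((m:ℤ):ℝ) ≤ ((X:ℤ):ℝ) := by exact_mod_cast hmX
  set Rr : ℝ := ((k₁ + k₂ : ℤ) : ℝ) ^ (2 * j + 1) - (k₁ : ℝ) ^ (2 * j + 1) -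
      (k₂ : ℝ) ^ (2 * j + 1) with hRrdef
  set P : ℝ := ((m:ℤ):ℝ) * ((X:ℤ):ℝ)^(2*j) with hPdef
  have hXp1 : (1:ℝ) ≤ ((X:ℤ):ℝ)^(2*j) := one_le_pow₀ (by linarith)
  have hP1 : (1:ℝ) ≤ P := by rw [hPdef]; nlinarith
  have hkeyR : P ≤ 4^j * |Rr| := by
    have hZ := key_int j hj k₁ k₂ h1 h2 hk
    have hcast : ((min (min |k₁+k₂| |k₁|) |k₂| * (max (max |k₁+k₂| |k₁|) |k₂|)^(2*j) : ℤ) : ℝ)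
        ≤ (((2:ℤ)^(2*j) * |(k₁+k₂)^(2*j+1) - k₁^(2*j+1) - k₂^(2*j+1)| : ℤ) : ℝ) := by
      exact_mod_cast hZ
    push_cast at hcast
    calc P ≤ (2:ℝ)^(2*j) * |Rr| := by
          rw [hPdef, hRrdef, hmdef, hXdef]
          convert hcast using 3 <;> push_cast <;> rfl
      _ = 4^j * |Rr| := by rw [pow_mul]; norm_num
  set r : ℝ := (1 + P) ^ eps with hrdef
  have hr0 : (0:ℝ) ≤ r := rpow_nonneg (by linarith) _
  have hnear' : |μ - Rr| ≤ r := hnear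
  have hrsq : r^2 ≤ 1 + P := by
    have h2eps : eps * 2 ≤ 1 := by linarith
    calc r^2 = ((1+P) ^ eps) ^ ((2:ℕ):ℝ) := by
          rw [Real.rpow_natCast, hrdef]
      _ = (1+P) ^ (eps * 2) := by
          rw [← Real.rpow_mul (by linarith : (0:ℝ) ≤ 1 + P)]; norm_num
      _ ≤ (1+P) ^ (1:ℝ) :=
          Real.rpow_le_rpow_of_exponent_le (by linarith) h2eps
      _ = 1 + P := Real.rpow_one _
  have hRub : |Rr| ≤ 4*M + r := by
    have ha := abs_sub_abs_le_abs_sub Rr μ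
    rw [abs_sub_comm Rr μ] at ha
    linarith
  have hMhalf1 : (1:ℝ) ≤ M ^ ((1:ℝ)/2) := by
    calc (1:ℝ) = (1:ℝ) ^ ((1:ℝ)/2) := (Real.one_rpow _).symm
      _ ≤ M ^ ((1:ℝ)/2) := Real.rpow_le_rpow (by norm_num) hM (by norm_num)
  have hMhalfM : M ^ ((1:ℝ)/2) ≤ M := by
    calc M ^ ((1:ℝ)/2) ≤ M ^ (1:ℝ) :=
          Real.rpow_le_rpow_of_exponent_le hM (by norm_num)
      _ = M := Real.rpow_one _
  have hrb : r ≤ 4^(j+2) * M ^ ((1:ℝ)/2) := by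
    have h16 : (4:ℝ)^(j+2) = 16 * 4^j := by rw [pow_add]; ring
    rcases le_or_gt r (2 * 4^j) with hcase | hcase
    · calc r ≤ 2 * 4^j := hcase
        _ ≤ 4^(j+2) * M ^ ((1:ℝ)/2) := by rw [h16]; nlinarith [hMhalf1, h4j]
    · have hb1 : r^2 ≤ 1 + 4^j * (4*M + r) := by
        have h5 : (4:ℝ)^j * |Rr| ≤ 4^j * (4*M + r) :=
          mul_le_mul_of_nonneg_left hRub (by positivity)
        linarith
      have hb3 : r^2 ≤ 4^(j+2) * M := by
        rw [h16]
        nlinarith [hb1, hcase, h4j, hM, mul_pos (pow_pos (show (0:ℝ)<4 by norm_num) j) hM0]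
      have hb4 : (4^(j+2) * M ^ ((1:ℝ)/2))^2 = 4^(j+2) * 4^(j+2) * M := by
        have hsq : (M ^ ((1:ℝ)/2))^2 = M := by
          rw [← Real.rpow_natCast (M ^ ((1:ℝ)/2)) 2, ← Real.rpow_mul hM0.le]
          norm_num
        rw [mul_pow, hsq]; ring
      have hb5 : r^2 ≤ (4^(j+2) * M ^ ((1:ℝ)/2))^2 := by
        rw [hb4]
        have h6 : (1:ℝ) ≤ (4:ℝ)^(j+2) := one_le_pow₀ (by norm_num)
        nlinarith
      exact (pow_le_pow_iff_left₀ hr0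
        (by positivity : (0:ℝ) ≤ 4^(j+2) * M ^ ((1:ℝ)/2)) two_ne_zero).mp hb5
  have hPQ : P ≤ C₂ * M := by
    have h5 : (4:ℝ)^j * |Rr| ≤ 4^j * (4*M + 4^(j+2) * M ^ ((1:ℝ)/2)) := by
      have := mul_le_mul_of_nonneg_left (show |Rr| ≤ 4*M + 4^(j+2) * M ^ ((1:ℝ)/2) by
        linarith) (show (0:ℝ) ≤ 4^j by positivity)
      linarith
    have h6 : (4:ℝ)^j * (4*M + 4^(j+2) * M ^ ((1:ℝ)/2)) ≤ 4^j * (4*M + 4^(j+2) * M) := by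
      have h4p : (0:ℝ) < 4^(j+2) := by positivity
      have h7 : (4:ℝ)^(j+2) * M ^ ((1:ℝ)/2) ≤ 4^(j+2) * M :=
        mul_le_mul_of_nonneg_left hMhalfM h4p.le
      nlinarith [pow_pos (show (0:ℝ) < 4 by norm_num) j]
    have h8 : (4:ℝ)^j * (4*M + 4^(j+2) * M) = C₂ * M := by rw [hC₂def]; ring
    linarith [hkeyR]
  refine ⟨hPQ, ?_⟩
  have hrρ : r ≤ (1 + C₂) * M ^ eps := by
    calc r = (1 + P) ^ eps := hrdef
      _ ≤ (1 + C₂ * M) ^ eps :=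
          Real.rpow_le_rpow (by linarith) (by linarith) heps0.le
      _ ≤ ((1 + C₂) * M) ^ eps := by
          apply Real.rpow_le_rpow (by nlinarith) _ heps0.le
          nlinarith
      _ = (1 + C₂) ^ eps * M ^ eps :=
          Real.mul_rpow (by linarith) hM0.le
      _ ≤ (1 + C₂) * M ^ eps := by
          have h9 : (1 + C₂) ^ eps ≤ (1 + C₂) ^ (1:ℝ) :=
            Real.rpow_le_rpow_of_exponent_le (by linarith) (by linarith)
          rw [Real.rpow_one] at h9
          have hMeps0 : (0:ℝ) ≤ M ^ eps := rpow_nonneg hM0.le _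
          nlinarith
  exact hnear'.trans hrρ

end Aux

/-- Lemma 2.5: for dyadic `M ≥ 1`, the measure of the set of `μ` with
`|μ| ∼ M` lying within `⟨|k_min||k_max|^{2j}⟩^{ε′}` of some resonance value
`k^{2j+1} − k₁^{2j+1} − k₂^{2j+1}` is at most `C M^{(100j+1)/(50(2j+1))}`,
where `ε′ = 1/(100(2j+1))`. -/
theorem stmt6 (j : ℕ) (hj : 1 ≤ j) :
    ∃ C : ℝ, 0 < C ∧
      ∀ M : ℝ, 1 ≤ M → (∃ n : ℕ, M = 2 ^ n) →
        volume {μ : ℝ | (M ≤ |μ| ∧ |μ| ≤ 4 * M) ∧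
            ∃ k₁ k₂ : ℤ, k₁ ≠ 0 ∧ k₂ ≠ 0 ∧ k₁ + k₂ ≠ 0 ∧
              |μ - (((k₁ + k₂ : ℤ) : ℝ) ^ (2 * j + 1) - (k₁ : ℝ) ^ (2 * j + 1) -
                  (k₂ : ℝ) ^ (2 * j + 1))| ≤
                jb ((min (min |((k₁ + k₂ : ℤ) : ℝ)| |(k₁ : ℝ)|) |(k₂ : ℝ)|) *
                      (max (max |((k₁ + k₂ : ℤ) : ℝ)| |(k₁ : ℝ)|) |(k₂ : ℝ)|) ^ (2 * j)) ^
                  (1 / (100 * (2 * (j : ℝ) + 1)))} ≤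
          ENNReal.ofReal (C * M ^ ((100 * (j : ℝ) + 1) / (50 * (2 * (j : ℝ) + 1)))) := by
  have hjℝ : (1:ℝ) ≤ (j:ℝ) := by exact_mod_cast hj
  have h4j : (1:ℝ) ≤ (4:ℝ)^j := one_le_pow₀ (by norm_num)
  have hC₂ : (1:ℝ) ≤ 4^j * (4 + 4^(j+2)) := by
    have : (1:ℝ) ≤ 4 + 4^(j+2) := by nlinarith [pow_pos (show (0:ℝ)<4 by norm_num) (j+2)]
    nlinarith
  set C₂ : ℝ := 4^j * (4 + 4^(j+2)) with hC₂def
  refine ⟨60 * C₂ * (1 + C₂), by nlinarith, ?_⟩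
  intro M hM _
  have hM0 : (0:ℝ) < M := by linarith
  set eps : ℝ := 1/(100*(2*(j:ℝ)+1)) with hepsdef
  set e1 : ℝ := 1/(2*(j:ℝ)+1) with he1def
  set θ : ℝ := 1/(2*(j:ℝ)) with hθdef
  have hden : (0:ℝ) < 2*(j:ℝ)+1 := by linarith
  have hden2 : (0:ℝ) < 2*(j:ℝ) := by linarith
  have heps0 : 0 < eps := by positivity
  have he10 : 0 < e1 := by positivity
  set Q : ℝ := C₂ * M with hQdef
  have hQ1 : (1:ℝ) ≤ Q := by nlinarith
  have hQ0 : (0:ℝ) ≤ Q := by linarith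
  set ρ : ℝ := (1 + C₂) * M ^ eps with hρdef
  have hMeps0 : (0:ℝ) ≤ M ^ eps := rpow_nonneg hM0.le _
  have hρ0 : 0 ≤ ρ := by rw [hρdef]; positivity
  set A : ℕ := ⌊Q ^ e1⌋₊ with hAdef
  set W : ℕ → ℤ := fun a => ⌊(Q / (a:ℝ)) ^ θ⌋ with hWdef
  set RR : ℤ → ℤ → ℝ := fun p q =>
    ((p + q : ℤ) : ℝ) ^ (2*j+1) - (p:ℝ) ^ (2*j+1) - (q:ℝ) ^ (2*j+1) with hRRdef
  set ctr : ℕ → Fin 3 × ℤ × ℤ → ℝ := fun a x =>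
    if x.1 = 0 then RR (x.2.1 * (a:ℤ)) x.2.2
    else if x.1 = 1 then RR x.2.2 (x.2.1 * (a:ℤ))
    else RR x.2.2 (x.2.1 * (a:ℤ) - x.2.2) with hctrdef
  set G : ℕ → Finset (Fin 3 × ℤ × ℤ) := fun a =>
    Finset.univ ×ˢ (({-1,1} : Finset ℤ) ×ˢ Finset.Icc (-(W a)) (W a)) with hGdef
  have hWnn : ∀ a : ℕ, 0 ≤ W a := by
    intro a
    exact Int.floor_nonneg.mpr (rpow_nonneg (by positivity) _)
  have hroot : ∀ (x Qv : ℝ) (nn : ℕ), 0 ≤ x → 0 ≤ Qv → 0 < (nn:ℝ) →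
      x^nn ≤ Qv → x ≤ Qv ^ (1/(nn:ℝ)) := by
    intro x Qv nn hx hQv hnn hpow
    calc x = (x^nn) ^ (1/(nn:ℝ)) := by
          rw [← Real.rpow_natCast x nn, ← Real.rpow_mul hx, mul_one_div,
            div_self hnn.ne', Real.rpow_one]
      _ ≤ Qv ^ (1/(nn:ℝ)) := Real.rpow_le_rpow (by positivity) hpow (by positivity)
  -- covering
  have hcover : {μ : ℝ | (M ≤ |μ| ∧ |μ| ≤ 4 * M) ∧
            ∃ k₁ k₂ : ℤ, k₁ ≠ 0 ∧ k₂ ≠ 0 ∧ k₁ + k₂ ≠ 0 ∧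
              |μ - (((k₁ + k₂ : ℤ) : ℝ) ^ (2 * j + 1) - (k₁ : ℝ) ^ (2 * j + 1) -
                  (k₂ : ℝ) ^ (2 * j + 1))| ≤
                jb ((min (min |((k₁ + k₂ : ℤ) : ℝ)| |(k₁ : ℝ)|) |(k₂ : ℝ)|) *
                      (max (max |((k₁ + k₂ : ℤ) : ℝ)| |(k₁ : ℝ)|) |(k₂ : ℝ)|) ^ (2 * j)) ^
                  (1 / (100 * (2 * (j : ℝ) + 1)))}
      ⊆ ⋃ a ∈ Finset.Icc 1 A, ⋃ x ∈ G a, Set.Icc (ctr a x - ρ) (ctr a x + ρ) := by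
    intro μ hμ
    obtain ⟨⟨hMl, hMu⟩, k₁, k₂, h1, h2, hk, hnear⟩ := hμ
    set m : ℤ := min (min |k₁+k₂| |k₁|) |k₂| with hmdef
    set X : ℤ := max (max |k₁+k₂| |k₁|) |k₂| with hXdef
    have habsK : 1 ≤ |k₁+k₂| := Int.one_le_abs hk
    have habs1 : 1 ≤ |k₁| := Int.one_le_abs h1
    have habs2 : 1 ≤ |k₂| := Int.one_le_abs h2
    have hm1 : 1 ≤ m := le_min (le_min habsK habs1) habs2
    have hmX : m ≤ X := le_trans (min_le_left _ _)
      (le_trans (min_le_left _ _) (le_trans (le_max_left _ _) (le_max_left _ _)))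
    have hX1 : 1 ≤ X := hm1.trans hmX
    have hmR1 : (1:ℝ) ≤ ((m:ℤ):ℝ) := by exact_mod_cast hm1
    have hmXR : ((m:ℤ):ℝ) ≤ ((X:ℤ):ℝ) := by exact_mod_cast hmX
    have hmcast : ((m:ℤ):ℝ) = min (min |((k₁ + k₂ : ℤ) : ℝ)| |(k₁ : ℝ)|) |(k₂ : ℝ)| := by
      rw [hmdef]; push_cast; rfl
    have hXcast : ((X:ℤ):ℝ) = max (max |((k₁ + k₂ : ℤ) : ℝ)| |(k₁ : ℝ)|) |(k₂ : ℝ)| := by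
      rw [hXdef]; push_cast; rfl
    have hP0 : (0:ℝ) ≤ ((m:ℤ):ℝ) * ((X:ℤ):ℝ)^(2*j) := by positivity
    have hjbeq : jb ((min (min |((k₁ + k₂ : ℤ) : ℝ)| |(k₁ : ℝ)|) |(k₂ : ℝ)|) *
          (max (max |((k₁ + k₂ : ℤ) : ℝ)| |(k₁ : ℝ)|) |(k₂ : ℝ)|) ^ (2 * j))
        = 1 + ((m:ℤ):ℝ) * ((X:ℤ):ℝ)^(2*j) := by
      rw [← hmcast, ← hXcast, jb, abs_of_nonneg hP0]
    rw [hjbeq] at hnear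
    obtain ⟨hPQ, hnearρ⟩ := witness_bounds j hj M μ hM hMu k₁ k₂ h1 h2 hk hnear
    rw [← hC₂def] at hPQ hnearρ
    rw [← hρdef] at hnearρ
    set Rr : ℝ := ((k₁ + k₂ : ℤ) : ℝ) ^ (2 * j + 1) - (k₁ : ℝ) ^ (2 * j + 1) -
        (k₂ : ℝ) ^ (2 * j + 1) with hRrdef
    set a : ℕ := m.toNat with hadef
    have hma : (a:ℤ) = m := Int.toNat_of_nonneg (by omega)
    have hmaR : ((a:ℕ):ℝ) = ((m:ℤ):ℝ) := by rw [← hma]; push_cast; ring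
    have ha1R : (1:ℝ) ≤ ((a:ℕ):ℝ) := by rw [hmaR]; exact hmR1
    have haA : a ∈ Finset.Icc 1 A := by
      rw [Finset.mem_Icc]
      refine ⟨by omega, ?_⟩
      rw [hAdef]
      apply Nat.le_floor
      have hp : ((m:ℤ):ℝ)^(2*j) ≤ ((X:ℤ):ℝ)^(2*j) :=
        pow_le_pow_left₀ (by linarith) hmXR _
      have hmn : ((m:ℤ):ℝ)^(2*j+1) ≤ Q := by
        have h10 : ((m:ℤ):ℝ)^(2*j+1) = ((m:ℤ):ℝ) * ((m:ℤ):ℝ)^(2*j) := by ring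
        have h11 : ((m:ℤ):ℝ) * ((m:ℤ):ℝ)^(2*j) ≤ ((m:ℤ):ℝ) * ((X:ℤ):ℝ)^(2*j) :=
          mul_le_mul_of_nonneg_left hp (by linarith)
        rw [h10, hQdef]
        linarith
      have h12 := hroot ((m:ℤ):ℝ) Q (2*j+1) (by linarith) hQ0 (by positivity) hmn
      rw [hmaR]
      refine h12.trans_eq ?_
      rw [he1def]; push_cast; ring
    have hwb : ∀ w : ℤ, |w| ≤ X → w ∈ Finset.Icc (-(W a)) (W a) := by
      intro w hw
      have hXQ : ((X:ℤ):ℝ)^(2*j) ≤ Q/((a:ℕ):ℝ) := by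
        rw [le_div_iff₀ (by linarith)]
        have h12 : ((X:ℤ):ℝ)^(2*j) * ((a:ℕ):ℝ) = ((m:ℤ):ℝ) * ((X:ℤ):ℝ)^(2*j) := by
          rw [hmaR]; ring
        rw [h12, hQdef]
        linarith
      have hwX : ((|w|:ℤ):ℝ)^(2*j) ≤ Q/((a:ℕ):ℝ) := by
        refine le_trans (pow_le_pow_left₀ (by positivity) ?_ _) hXQ
        exact_mod_cast hw
      have h13 := hroot ((|w|:ℤ):ℝ) (Q/((a:ℕ):ℝ)) (2*j) (by positivity)
        (by positivity) (by push_cast; linarith) hwX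
      have h14 : ((|w|:ℤ):ℝ) ≤ (Q/((a:ℕ):ℝ)) ^ θ := by
        convert h13 using 2
        rw [hθdef]; push_cast; ring
      have h15 : |w| ≤ W a := by
        rw [hWdef]
        exact Int.le_floor.mpr (by exact_mod_cast h14)
      rw [Finset.mem_Icc]
      exact ⟨by have := (abs_le.mp h15).1; omega, by have := (abs_le.mp h15).2; omega⟩
    have hrole : |k₁| = m ∨ |k₂| = m ∨ |k₁+k₂| = m := by
      rw [hmdef]
      rcases le_total (min |k₁+k₂| |k₁|) |k₂| with h | h
      · rcases le_total |k₁+k₂| |k₁| with h' | h'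
        · right; right; rw [min_eq_left h, min_eq_left h']
        · left; rw [min_eq_left h, min_eq_right h']
      · right; left; rw [min_eq_right h]
    have hicc : ∀ c : ℝ, c = Rr → μ ∈ Set.Icc (c - ρ) (c + ρ) := by
      intro c hc
      rw [hc]
      have := abs_le.mp hnearρ
      exact ⟨by linarith [this.1], by linarith [this.2]⟩
    have hsgn : ∀ v : ℤ, |v| = m → ∃ s : ℤ, s ∈ ({-1,1} : Finset ℤ) ∧ s * (a:ℤ) = v := by
      intro v hv
      rcases (abs_eq (show (0:ℤ) ≤ m by omega)).mp hv with hv' | hv'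
      · exact ⟨1, by simp, by omega⟩
      · exact ⟨-1, by simp, by omega⟩
    rcases hrole with hcase | hcase | hcase
    · obtain ⟨s, hs, hsa⟩ := hsgn k₁ hcase
      refine Set.mem_iUnion₂.mpr ⟨a, haA, Set.mem_iUnion₂.mpr ⟨((0:Fin 3), s, k₂), ?_, ?_⟩⟩
      · rw [hGdef]
        simp only [Finset.mem_product, Finset.mem_univ, true_and]
        exact ⟨hs, hwb k₂ (le_max_right _ _)⟩
      · apply hicc
        simp only [hctrdef, eq_self_iff_true, if_true]
        rw [hRRdef, hRrdef, hsa]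
    · obtain ⟨s, hs, hsa⟩ := hsgn k₂ hcase
      refine Set.mem_iUnion₂.mpr ⟨a, haA, Set.mem_iUnion₂.mpr ⟨((1:Fin 3), s, k₁), ?_, ?_⟩⟩
      · rw [hGdef]
        simp only [Finset.mem_product, Finset.mem_univ, true_and]
        exact ⟨hs, hwb k₁ (le_trans (le_max_right _ _) (le_max_left _ _))⟩
      · apply hicc
        simp only [hctrdef, if_neg (by decide : ¬((1:Fin 3) = 0)), eq_self_iff_true, if_true]
        rw [hRRdef, hRrdef, hsa]
    · obtain ⟨s, hs, hsa⟩ := hsgn (k₁+k₂) hcase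
      refine Set.mem_iUnion₂.mpr ⟨a, haA, Set.mem_iUnion₂.mpr ⟨((2:Fin 3), s, k₁), ?_, ?_⟩⟩
      · rw [hGdef]
        simp only [Finset.mem_product, Finset.mem_univ, true_and]
        exact ⟨hs, hwb k₁ (le_trans (le_max_right _ _) (le_max_left _ _))⟩
      · apply hicc
        simp only [hctrdef, if_neg (by decide : ¬((2:Fin 3) = 0)),
          if_neg (by decide : ¬((2:Fin 3) = 1))]
        have hk₂ : s * (a:ℤ) - k₁ = k₂ := by omega
        rw [hRRdef, hRrdef, hk₂]
  -- measure estimate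
  have hcardR : ∀ a : ℕ, ((G a).card : ℝ) ≤ 6 * (2*((Q/(a:ℝ))^θ) + 1) := by
    intro a
    have hc : (G a).card = 3 * (2 * (W a + 1 - -(W a)).toNat) := by
      rw [hGdef]
      simp only [Finset.card_product, Finset.card_univ, Fintype.card_fin,
        Finset.card_pair (by norm_num : (-1:ℤ) ≠ 1), Int.card_Icc]
    have h2W : ((W a + 1 - -(W a)).toNat : ℝ) = 2*((W a : ℤ):ℝ)+1 := by
      have h0 := hWnn a
      have : ((W a + 1 - -(W a)).toNat : ℤ) = 2 * W a + 1 := by omega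
      calc ((W a + 1 - -(W a)).toNat : ℝ) = (((W a + 1 - -(W a)).toNat : ℤ) : ℝ) := by
            push_cast; ring
        _ = ((2 * W a + 1 : ℤ) : ℝ) := by rw [this]
        _ = 2*((W a : ℤ):ℝ)+1 := by push_cast; ring
    have hWfl : ((W a : ℤ):ℝ) ≤ (Q/(a:ℝ))^θ := Int.floor_le _
    rw [hc]
    push_cast
    rw [h2W]
    linarith
  calc volume {μ : ℝ | (M ≤ |μ| ∧ |μ| ≤ 4 * M) ∧
            ∃ k₁ k₂ : ℤ, k₁ ≠ 0 ∧ k₂ ≠ 0 ∧ k₁ + k₂ ≠ 0 ∧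
              |μ - (((k₁ + k₂ : ℤ) : ℝ) ^ (2 * j + 1) - (k₁ : ℝ) ^ (2 * j + 1) -
                  (k₂ : ℝ) ^ (2 * j + 1))| ≤
                jb ((min (min |((k₁ + k₂ : ℤ) : ℝ)| |(k₁ : ℝ)|) |(k₂ : ℝ)|) *
                      (max (max |((k₁ + k₂ : ℤ) : ℝ)| |(k₁ : ℝ)|) |(k₂ : ℝ)|) ^ (2 * j)) ^
                  (1 / (100 * (2 * (j : ℝ) + 1)))}
      ≤ volume (⋃ a ∈ Finset.Icc 1 A, ⋃ x ∈ G a,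
        Set.Icc (ctr a x - ρ) (ctr a x + ρ)) := measure_mono hcover
    _ ≤ ∑ a ∈ Finset.Icc 1 A, volume (⋃ x ∈ G a, Set.Icc (ctr a x - ρ) (ctr a x + ρ)) :=
        measure_biUnion_finset_le _ _
    _ ≤ ∑ a ∈ Finset.Icc 1 A, ∑ x ∈ G a, volume (Set.Icc (ctr a x - ρ) (ctr a x + ρ)) :=
        Finset.sum_le_sum (fun a _ => measure_biUnion_finset_le _ _)
    _ = ∑ a ∈ Finset.Icc 1 A, ENNReal.ofReal (((G a).card : ℝ) * (2*ρ)) := by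
        apply Finset.sum_congr rfl
        intro a _
        have hIcc : ∀ x : Fin 3 × ℤ × ℤ, volume (Set.Icc (ctr a x - ρ) (ctr a x + ρ))
            = ENNReal.ofReal (2*ρ) := by
          intro x
          rw [Real.volume_Icc]
          congr 1
          ring
        rw [Finset.sum_congr rfl (fun x _ => hIcc x), Finset.sum_const, nsmul_eq_mul,
          ← ENNReal.ofReal_natCast, ← ENNReal.ofReal_mul (by positivity)]
    _ = ENNReal.ofReal (∑ a ∈ Finset.Icc 1 A, ((G a).card : ℝ) * (2*ρ)) :=
        (ENNReal.ofReal_sum_of_nonneg (fun a _ => by positivity)).symm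
    _ ≤ ENNReal.ofReal ((60 * C₂ * (1 + C₂)) *
          M ^ ((100 * (j : ℝ) + 1) / (50 * (2 * (j : ℝ) + 1)))) := by
        apply ENNReal.ofReal_le_ofReal
        have hstep1 : ∑ a ∈ Finset.Icc 1 A, ((G a).card : ℝ) * (2*ρ)
            ≤ ∑ a ∈ Finset.Icc 1 A, (6 * (2*((Q/(a:ℝ))^θ) + 1)) * (2*ρ) := by
          apply Finset.sum_le_sum
          intro a _
          exact mul_le_mul_of_nonneg_right (hcardR a) (by positivity)
        have hstep2 : ∑ a ∈ Finset.Icc 1 A, (6 * (2*((Q/(a:ℝ))^θ) + 1)) * (2*ρ)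
            = 12*ρ * ∑ a ∈ Finset.Icc 1 A, (2*((Q/(a:ℝ))^θ) + 1) := by
          rw [Finset.mul_sum]
          apply Finset.sum_congr rfl
          intro a _
          ring
        have hsb := sum_bound j hj Q hQ1
        rw [← hθdef, ← he1def, ← hAdef] at hsb
        have hstep3 : (12:ℝ)*ρ * ∑ a ∈ Finset.Icc 1 A, (2*((Q/(a:ℝ))^θ) + 1)
            ≤ 12*ρ * (5 * Q^(2*e1)) := by
          apply mul_le_mul_of_nonneg_left hsb (by positivity)
        have hQ2e1 : Q^(2*e1) ≤ C₂ * M^(2*e1) := by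
          calc Q^(2*e1) = C₂^(2*e1) * M^(2*e1) := by
                rw [hQdef, Real.mul_rpow (by linarith) hM0.le]
            _ ≤ C₂ * M^(2*e1) := by
                have h1 : C₂^(2*e1) ≤ C₂^(1:ℝ) := by
                  apply Real.rpow_le_rpow_of_exponent_le hC₂
                  rw [he1def, mul_one_div, div_le_one hden]
                  linarith
                rw [Real.rpow_one] at h1
                have h2 : (0:ℝ) ≤ M^(2*e1) := rpow_nonneg hM0.le _
                nlinarith
        have hexp : M ^ eps * M^(2*e1) ≤ M ^ ((100 * (j : ℝ) + 1) / (50 * (2 * (j : ℝ) + 1))) := by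
          rw [← Real.rpow_add hM0]
          apply Real.rpow_le_rpow_of_exponent_le hM
          rw [hepsdef, he1def]
          rw [show 1/(100*(2*(j:ℝ)+1)) + 2*(1/(2*(j:ℝ)+1)) = 201/(100*(2*(j:ℝ)+1)) by
            field_simp; ring]
          rw [div_le_div_iff₀ (by positivity) (by positivity)]
          nlinarith
        have hfinal : 12*ρ * (5 * Q^(2*e1)) ≤ (60 * C₂ * (1 + C₂)) *
            M ^ ((100 * (j : ℝ) + 1) / (50 * (2 * (j : ℝ) + 1))) := by
          have hQe0 : (0:ℝ) ≤ Q^(2*e1) := rpow_nonneg hQ0 _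
          have hM2e0 : (0:ℝ) ≤ M^(2*e1) := rpow_nonneg hM0.le _
          calc 12*ρ * (5 * Q^(2*e1)) = 60 * ρ * Q^(2*e1) := by ring
            _ ≤ 60 * ρ * (C₂ * M^(2*e1)) := by
                apply mul_le_mul_of_nonneg_left hQ2e1 (by positivity)
            _ = (60 * C₂ * (1 + C₂)) * (M ^ eps * M^(2*e1)) := by rw [hρdef]; ring
            _ ≤ (60 * C₂ * (1 + C₂)) *
                M ^ ((100 * (j : ℝ) + 1) / (50 * (2 * (j : ℝ) + 1))) := by
                apply mul_le_mul_of_nonneg_left hexp (by nlinarith)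
        linarith
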